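/- Let C be an associative conformal algebra over k[T]. Define two bilinear operations on C by a⊢b = (a_λ b)|_{λ=0} and a⊣b = (a_λ b)|_{λ=−T}. Then (C, ⊢, ⊣) is a diassociative algebra, i.e. satisfies the five diassociativity identities. -/

import Mathlib

/-- Substitution `ν ↦ λ + μ` (outer index = power of μ, inner = power of λ). -/
noncomputable def substAdd {M : Type*} [AddCommMonoid M] (y : ℕ →₀ M) :
    ℕ →₀ (ℕ →₀ M) :=
  y.sum fun t c =>
    (Finset.range (t + 1)).sum fun i =>
      Finsupp.single (t - i) (Finsupp.single i ((t.choose i) • c))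

/-- Multiplication by `λ^s` on a two-variable polynomial. -/
noncomputable def innerShift {M : Type*} [AddCommMonoid M] (s : ℕ)
    (z : ℕ →₀ (ℕ →₀ M)) : ℕ →₀ (ℕ →₀ M) :=
  z.sum fun n f => Finsupp.single n (Finsupp.mapDomain (· + s) f)

/-- The operation `a ⊢ b = (a_λ b)|_{λ=0}` (the constant λ-coefficient). -/
noncomputable def dVdash {k C : Type*} [Field k] [AddCommGroup C] [Module k C]
    (prod : C →ₗ[k] C →ₗ[k] (ℕ →₀ C)) (a b : C) : C :=
  (prod a b) 0

/-- The operation `a ⊣ b = (a_λ b)|_{λ=−T}`: each power `λ^n` is replaced by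
`(−T)^n` acting on the coefficient from the left. -/
noncomputable def dDashv {k C : Type*} [Field k] [AddCommGroup C] [Module k C]
    (T : Module.End k C) (prod : C →ₗ[k] C →ₗ[k] (ℕ →₀ C)) (a b : C) : C :=
  (prod a b).sum fun n x => ((-1 : k) ^ n) • (T ^ n) x

open Finsupp

section
variable {k C : Type*} [Field k] [AddCommGroup C] [Module k C]

noncomputable def evT (T : Module.End k C) : (ℕ →₀ C) →ₗ[k] C :=
  Finsupp.lsum k fun n => ((-1 : k) ^ n • (T ^ n) : Module.End k C)

noncomputable def Sop (k : Type*) {C : Type*} [Field k] [AddCommGroup C] [Module k C] :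
    (ℕ →₀ C) →ₗ[k] (ℕ →₀ C) := Finsupp.lmapDomain C k (· + 1)

noncomputable def TTop (T : Module.End k C) : (ℕ →₀ C) →ₗ[k] (ℕ →₀ C) :=
  Finsupp.mapRange.linearMap (T : C →ₗ[k] C)

lemma evT_single (T : Module.End k C) (n : ℕ) (x : C) :
    evT T (single n x) = (-1 : k) ^ n • (T ^ n) x := by
  simp [evT]

lemma Sop_apply (p : ℕ →₀ C) : Sop k p = Finsupp.mapDomain (· + 1) p := rfl

lemma Sop_single (n : ℕ) (x : C) : Sop k (single n x) = single (n + 1) x := by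
  rw [Sop_apply, mapDomain_single]

lemma TTop_single (T : Module.End k C) (n : ℕ) (x : C) :
    TTop T (single n x) = single n (T x) := by
  simp [TTop]

lemma fsum_eq {α M N : Type*} [AddCommMonoid M] [AddCommMonoid N] [DecidableEq α]
    (c : α →₀ M) (f : α → M → N) (n : α) (h0 : f n 0 = 0)
    (h : ∀ m x, m ≠ n → f m x = 0) : c.sum f = f n (c n) := by
  rw [Finsupp.sum, Finset.sum_eq_single n (fun b _ hb => h b (c b) hb)
    (fun hn => by rw [Finsupp.notMem_support_iff.mp hn, h0])]

end

section
variable {k C : Type*} [Field k] [AddCommGroup C] [Module k C] (T : Module.End k C)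

noncomputable def Uop (T : Module.End k C) : (ℕ →₀ C) →ₗ[k] (ℕ →₀ C) :=
  TTop T + Sop k

lemma evT_Sop (p : ℕ →₀ C) : evT T (Sop k p) = (-1 : k) • T (evT T p) := by
  induction p using Finsupp.induction_linear with
  | zero => simp
  | add f g hf hg => simp [map_add, hf, hg, smul_add]
  | single n x =>
      rw [Sop_single, evT_single, evT_single, map_smul, smul_smul,
        show (T ^ (n + 1)) x = T ((T ^ n) x) from by
          rw [← Module.End.mul_apply, ← pow_succ']]
      congr 1
      ring

lemma evT_TTop (p : ℕ →₀ C) : evT T (TTop T p) = T (evT T p) := by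
  induction p using Finsupp.induction_linear with
  | zero => simp
  | add f g hf hg => simp [map_add, hf, hg]
  | single n x =>
      rw [TTop_single, evT_single, evT_single, map_smul]
      congr 1
      rw [← Module.End.mul_apply, ← Module.End.mul_apply, ← pow_succ, ← pow_succ']

lemma ev0_Sop (p : ℕ →₀ C) : (Sop k p) 0 = 0 := by
  rw [Sop_apply]
  exact Finsupp.mapDomain_notin_range _ _ (by simp)

lemma ev0_TTop (p : ℕ →₀ C) : (TTop T p) 0 = T (p 0) := by
  simp [TTop, Finsupp.mapRange_apply]

lemma evT_U (p : ℕ →₀ C) : evT T (Uop T p) = 0 := by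
  rw [Uop, LinearMap.add_apply, map_add, evT_TTop, evT_Sop, neg_one_smul, add_neg_cancel]

lemma evT_Upow (n : ℕ) (hn : n ≠ 0) (p : ℕ →₀ C) :
    evT T ((Uop T ^ n) p) = 0 := by
  obtain ⟨m, rfl⟩ := Nat.exists_eq_succ_of_ne_zero hn
  rw [pow_succ', Module.End.mul_apply, evT_U]

lemma ev0_U (p : ℕ →₀ C) : (Uop T p) 0 = T (p 0) := by
  rw [Uop, LinearMap.add_apply, Finsupp.add_apply, ev0_TTop, ev0_Sop, add_zero]

lemma ev0_Upow (n : ℕ) (p : ℕ →₀ C) :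
    ((Uop T ^ n) p) 0 = (T ^ n) (p 0) := by
  induction n with
  | zero => simp
  | succ m ih =>
      rw [pow_succ', Module.End.mul_apply, ev0_U, ih, pow_succ', Module.End.mul_apply]

lemma evT_Spow (s : ℕ) (p : ℕ →₀ C) :
    evT T ((Sop k ^ s) p) = (-1 : k) ^ s • (T ^ s) (evT T p) := by
  induction s with
  | zero => simp
  | succ m ih =>
      rw [pow_succ', Module.End.mul_apply, evT_Sop, ih, map_smul, smul_smul]
      rw [show T ((T ^ m) (evT T p)) = (T ^ (m + 1)) (evT T p) by
        rw [← Module.End.mul_apply, ← pow_succ']]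
      congr 1
      ring

lemma ev0_Spow (s : ℕ) (hs : s ≠ 0) (p : ℕ →₀ C) : ((Sop k ^ s) p) 0 = 0 := by
  obtain ⟨m, rfl⟩ := Nat.exists_eq_succ_of_ne_zero hs
  rw [pow_succ', Module.End.mul_apply, ev0_Sop]

lemma Spow_eq (s : ℕ) (p : ℕ →₀ C) :
    (Sop k ^ s) p = Finsupp.mapDomain (· + s) p := by
  induction s with
  | zero =>
      have h : (fun x : ℕ => x + 0) = id := funext fun x => rfl
      rw [pow_zero, Module.End.one_apply, h, Finsupp.mapDomain_id]
  | succ m ih =>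
      rw [pow_succ', Module.End.mul_apply, ih, Sop_apply, ← Finsupp.mapDomain_comp,
        show ((· + 1) ∘ (· + m) : ℕ → ℕ) = (· + (m + 1)) from
          funext fun n => by simp [Function.comp, add_assoc]]

end

section
variable {k C : Type*} [Field k] [AddCommGroup C] [Module k C] (T : Module.End k C)

lemma innerShift_apply (s : ℕ) (z : ℕ →₀ (ℕ →₀ C)) (n : ℕ) :
    (innerShift s z) n = Finsupp.mapDomain (· + s) (z n) := by
  unfold innerShift
  rw [Finsupp.sum_apply,
    fsum_eq z (fun m f => (single m (Finsupp.mapDomain (· + s) f) : ℕ →₀ (ℕ →₀ C)) n) n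
      (by simp) (fun m x hm => by simp [Finsupp.single_apply, hm]),
    Finsupp.single_eq_same]

lemma substAdd_zero (q : ℕ →₀ C) : (substAdd q) 0 = q := by
  unfold substAdd
  rw [Finsupp.sum_apply]
  have key : ∀ t (c : C),
      (((Finset.range (t + 1)).sum fun i =>
        Finsupp.single (t - i) (Finsupp.single i ((t.choose i) • c))) : ℕ →₀ (ℕ →₀ C)) 0
        = Finsupp.single t c := by
    intro t c
    rw [Finset.sum_apply']
    rw [Finset.sum_eq_single_of_mem t (Finset.self_mem_range_succ t)
      (fun i hi hne => by
        have hle := Finset.mem_range.mp hi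
        rw [Finsupp.single_apply, if_neg (by omega)])]
    rw [Nat.sub_self, Finsupp.single_eq_same, Nat.choose_self, one_smul]
  calc (q.sum fun t c => (((Finset.range (t + 1)).sum fun i =>
          Finsupp.single (t - i) (Finsupp.single i ((t.choose i) • c))) : ℕ →₀ (ℕ →₀ C)) 0)
      = q.sum fun t c => Finsupp.single t c := Finsupp.sum_congr fun t _ => key t (q t)
    _ = q := Finsupp.sum_single q

lemma mapRange_ev0_substAdd (q : ℕ →₀ C) :
    Finsupp.mapRange.linearMap (Finsupp.lapply (R := k) 0) (substAdd q) = q := by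
  unfold substAdd
  rw [map_finsuppSum]
  have key : ∀ t (c : C),
      Finsupp.mapRange.linearMap (Finsupp.lapply (R := k) 0)
        ((Finset.range (t + 1)).sum fun i =>
          Finsupp.single (t - i) (Finsupp.single i ((t.choose i) • c)))
        = Finsupp.single t c := by
    intro t c
    rw [map_sum]
    rw [Finset.sum_eq_single_of_mem 0 (by simp)
      (fun i _ hi => by
        simp only [Finsupp.mapRange.linearMap_apply, Finsupp.mapRange_single,
          Finsupp.lapply_apply, Finsupp.single_apply, if_neg (by omega : ¬ i = 0),
          Finsupp.single_zero])]
    simp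
  calc (q.sum fun t c => Finsupp.mapRange.linearMap (Finsupp.lapply (R := k) 0)
          ((Finset.range (t + 1)).sum fun i =>
            Finsupp.single (t - i) (Finsupp.single i ((t.choose i) • c))))
      = q.sum fun t c => Finsupp.single t c := Finsupp.sum_congr fun t _ => key t (q t)
    _ = q := Finsupp.sum_single q

lemma innerShift_zero (z : ℕ →₀ (ℕ →₀ C)) : innerShift 0 z = z := by
  ext n m
  rw [innerShift_apply,
    show (fun x : ℕ => x + 0) = id from funext fun x => rfl, Finsupp.mapDomain_id]

end

section
variable {k C : Type*} [Field k] [AddCommGroup C] [Module k C] (T : Module.End k C)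
  (prod : C →ₗ[k] C →ₗ[k] (ℕ →₀ C))

lemma sum_single_T (p : ℕ →₀ C) : (p.sum fun n x => single n (T x)) = TTop T p := by
  induction p using Finsupp.induction_linear with
  | zero => simp
  | add f g hf hg =>
      rw [Finsupp.sum_add_index' (fun n => by simp) (fun n x y => by simp), hf, hg, map_add]
  | single n x => rw [Finsupp.sum_single_index (by simp), TTop_single]

lemma prod_Tpow_left
    (hs1 : ∀ a b : C, prod (T a) b = - Finsupp.mapDomain (· + 1) (prod a b))
    (s : ℕ) (a b : C) :
    prod ((T ^ s) a) b = ((-1 : k) ^ s) • (Sop k ^ s) (prod a b) := by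
  induction s generalizing a with
  | zero => simp
  | succ m ih =>
      rw [pow_succ T m, Module.End.mul_apply, ih (T a), hs1, ← Sop_apply (k := k), map_neg, smul_neg,
        show (Sop k ^ m) (Sop k (prod a b)) = (Sop k ^ (m + 1)) (prod a b) from by
          rw [← Module.End.mul_apply, ← pow_succ],
        ← neg_smul]
      congr 1
      ring

lemma prod_Tpow_right
    (hs2 : ∀ a b : C,
      prod a (T b) =
        ((prod a b).sum fun n x => Finsupp.single n (T x)) +
          Finsupp.mapDomain (· + 1) (prod a b))
    (n : ℕ) (a b : C) :
    prod a ((T ^ n) b) = (Uop T ^ n) (prod a b) := by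
  have h1 : ∀ bb : C, prod a (T bb) = Uop T (prod a bb) := by
    intro bb
    rw [hs2, sum_single_T, ← Sop_apply (k := k), Uop, LinearMap.add_apply]
  induction n with
  | zero => simp
  | succ m ih =>
      rw [pow_succ' T m, Module.End.mul_apply, h1, ih, ← Module.End.mul_apply, ← pow_succ']

end

lemma substAdd_zero' {k C : Type*} [Field k] [AddCommGroup C] [Module k C] :
    substAdd (0 : ℕ →₀ C) = 0 := Finsupp.sum_zero_index

lemma innerShift_zero' {M : Type*} [AddCommMonoid M] (s : ℕ) :
    innerShift s (0 : ℕ →₀ (ℕ →₀ M)) = 0 := Finsupp.sum_zero_index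



/-- an associative conformal algebra `C` (a `k[T]`-module with a
bilinear λ-product, in the coefficient encoding `C[λ] = ℕ →₀ C`, satisfying
the sesquilinearity axioms and conformal associativity) becomes a
diassociative algebra under `a⊢b = (a_λ b)|_{λ=0}` and `a⊣b = (a_λ b)|_{λ=−T}`. -/
theorem stmt9 {k C : Type*} [Field k] [CharZero k] [AddCommGroup C] [Module k C]
    (T : Module.End k C)
    (prod : C →ₗ[k] C →ₗ[k] (ℕ →₀ C))
    -- (Ta)_λ b = −λ (a_λ b)
    (hs1 : ∀ a b : C, prod (T a) b = - Finsupp.mapDomain (· + 1) (prod a b))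
    -- a_λ (Tb) = (T + λ)(a_λ b)
    (hs2 : ∀ a b : C,
      prod a (T b) =
        ((prod a b).sum fun n x => Finsupp.single n (T x)) +
          Finsupp.mapDomain (· + 1) (prod a b))
    -- (a_λ (b_μ c)) = ((a_λ b)_{λ+μ} c)
    (hassoc : ∀ a b c : C,
      ((prod b c).sum fun n x => Finsupp.single n (prod a x)) =
        (prod a b).sum fun s x => innerShift s (substAdd (prod x c))) :
    (∀ x y z : C,
      dDashv T prod x (dVdash prod y z) = dDashv T prod x (dDashv T prod y z)) ∧
    (∀ x y z : C,
      dVdash prod (dDashv T prod x y) z = dVdash prod (dVdash prod x y) z) ∧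
    (∀ x y z : C,
      dVdash prod x (dVdash prod y z) = dVdash prod (dVdash prod x y) z) ∧
    (∀ x y z : C,
      dDashv T prod x (dDashv T prod y z) = dDashv T prod (dDashv T prod x y) z) ∧
    (∀ x y z : C,
      dVdash prod x (dDashv T prod y z) = dDashv T prod (dVdash prod x y) z) := by
  classical
  have hdd : ∀ a b : C, dDashv T prod a b = evT T (prod a b) := by
    intro a b
    unfold dDashv evT
    rw [Finsupp.lsum_apply]
    exact Finsupp.sum_congr fun n _ => by rw [LinearMap.smul_apply]
  have hdv : ∀ a b : C, dVdash prod a b = (prod a b) 0 := fun _ _ => rfl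
  have hddsum : ∀ a b : C, dDashv T prod a b
      = (prod a b).sum fun n x => ((-1 : k) ^ n) • (T ^ n) x := fun _ _ => rfl
  have keyProd : ∀ (x : C) (c : ℕ →₀ C),
      prod x (c.sum fun n cn => ((-1 : k) ^ n) • (T ^ n) cn)
        = c.sum fun n cn => ((-1 : k) ^ n) • (Uop T ^ n) (prod x cn) := by
    intro x c
    rw [map_finsuppSum]
    exact Finsupp.sum_congr fun n _ => by
      rw [map_smul, prod_Tpow_right T prod hs2]
  have keyA : ∀ (x : C) (c : ℕ →₀ C),
      evT T (prod x (c.sum fun n cn => ((-1 : k) ^ n) • (T ^ n) cn))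
        = evT T (prod x (c 0)) := by
    intro x c
    rw [keyProd, map_finsuppSum,
      fsum_eq c (fun n cn => evT T (((-1 : k) ^ n) • (Uop T ^ n) (prod x cn))) 0
        (by simp) (fun m x' hm => by rw [map_smul, evT_Upow T m hm, smul_zero])]
    simp
  have keyA0 : ∀ (x : C) (c : ℕ →₀ C),
      (prod x (c.sum fun n cn => ((-1 : k) ^ n) • (T ^ n) cn)) 0
        = c.sum fun n cn => ((-1 : k) ^ n) • (T ^ n) ((prod x cn) 0) := by
    intro x c
    rw [keyProd, Finsupp.sum_apply]
    exact Finsupp.sum_congr fun n _ => by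
      rw [Finsupp.smul_apply, ev0_Upow]
  have keyB : ∀ (z' : C) (e : ℕ →₀ C),
      prod (e.sum fun s es => ((-1 : k) ^ s) • (T ^ s) es) z'
        = e.sum fun s es => (Sop k ^ s) (prod es z') := by
    intro z' e
    have h0 : prod (e.sum fun s es => ((-1 : k) ^ s) • (T ^ s) es) z'
        = (prod.flip z') (e.sum fun s es => ((-1 : k) ^ s) • (T ^ s) es) := rfl
    rw [h0, map_finsuppSum]
    exact Finsupp.sum_congr fun s _ => by
      rw [map_smul, LinearMap.flip_apply, prod_Tpow_left T prod hs1, smul_smul, ← mul_pow,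
        neg_mul_neg, one_mul, one_pow, one_smul]
  refine ⟨?_, ?_, ?_, ?_, ?_⟩
  · -- (1)
    intro x y z
    rw [hdd, hdd, hddsum y z, keyA x (prod y z), hdv]
  · -- (2)
    intro x y z
    rw [hdv, hdv, hdv, hddsum x y, keyB z (prod x y), Finsupp.sum_apply,
      fsum_eq (prod x y) (fun s es => ((Sop k ^ s) (prod es z)) 0) 0
        (by simp) (fun s es hs => by exact ev0_Spow s hs _)]
    simp
  · -- (3)
    intro x y z
    have h := congrArg (fun p : ℕ →₀ (ℕ →₀ C) => (p 0) 0) (hassoc x y z)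
    simp only [Finsupp.sum_apply] at h
    rw [fsum_eq (prod y z)
        (fun n w => (((Finsupp.single n (prod x w) : ℕ →₀ (ℕ →₀ C)) 0) : ℕ →₀ C) 0) 0
        (by simp) (fun m w hm => by simp [Finsupp.single_eq_of_ne' hm]),
      Finsupp.single_eq_same] at h
    rw [fsum_eq (prod x y)
        (fun s w => (((innerShift s (substAdd (prod w z))) 0) : ℕ →₀ C) 0) 0
        (by simp [substAdd_zero' (k := k), innerShift_zero'])
        (fun s w hs => by
          rw [innerShift_apply, substAdd_zero, ← Spow_eq (k := k), ev0_Spow s hs]),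
      innerShift_apply, substAdd_zero, ← Spow_eq (k := k)] at h
    rw [hdv, hdv, hdv, hdv]
    simpa using h
  · -- (4)
    intro x y z
    have h := congrArg (fun p : ℕ →₀ (ℕ →₀ C) => evT T (p 0)) (hassoc x y z)
    simp only [Finsupp.sum_apply, map_finsuppSum] at h
    rw [fsum_eq (prod y z)
        (fun n w => evT T ((Finsupp.single n (prod x w) : ℕ →₀ (ℕ →₀ C)) 0)) 0
        (by simp) (fun m w hm => by simp [Finsupp.single_eq_of_ne' hm]),
      Finsupp.single_eq_same] at h
    have hR : ((prod x y).sum fun s w =>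
          evT T ((innerShift s (substAdd (prod w z))) 0))
        = (prod x y).sum fun s w => evT T ((Sop k ^ s) (prod w z)) :=
      Finsupp.sum_congr fun s _ => by
        rw [innerShift_apply, substAdd_zero, ← Spow_eq (k := k)]
    rw [hR] at h
    rw [hddsum y z]
    rw [hdd x]
    rw [keyA x (prod y z)]
    rw [hdd (dDashv T prod x y) z]
    rw [hddsum x y, keyB z (prod x y), map_finsuppSum]
    exact h
  · -- (5)
    intro x y z
    have h := congrArg
      (fun p : ℕ →₀ (ℕ →₀ C) =>
        evT T (Finsupp.mapRange.linearMap (Finsupp.lapply (R := k) 0) p))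
      (hassoc x y z)
    simp only [map_finsuppSum] at h
    have hL : ((prod y z).sum fun n w =>
          evT T (Finsupp.mapRange.linearMap (Finsupp.lapply (R := k) 0)
            (Finsupp.single n (prod x w))))
        = (prod y z).sum fun n w => ((-1 : k) ^ n) • (T ^ n) ((prod x w) 0) :=
      Finsupp.sum_congr fun n _ => by
        simp only [Finsupp.mapRange.linearMap_apply, Finsupp.mapRange_single,
          Finsupp.lapply_apply]
        rw [evT_single]
    rw [hL] at h
    rw [fsum_eq (prod x y)
        (fun s w => evT T (Finsupp.mapRange.linearMap (Finsupp.lapply (R := k) 0)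
          (innerShift s (substAdd (prod w z))))) 0
        (by simp [substAdd_zero' (k := k), innerShift_zero'])
        (fun s w hs => by
          have hz : Finsupp.mapRange.linearMap (Finsupp.lapply (R := k) 0)
              (innerShift s (substAdd (prod w z))) = 0 := by
            ext n
            rw [Finsupp.mapRange.linearMap_apply, Finsupp.mapRange_apply,
              Finsupp.lapply_apply, innerShift_apply, ← Spow_eq (k := k),
              ev0_Spow s hs, Finsupp.coe_zero, Pi.zero_apply]
          rw [hz, map_zero]),
      innerShift_zero, mapRange_ev0_substAdd] at h
    rw [hdv, hddsum y z, keyA0 x (prod y z), hdd, hdv]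
    exact h
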